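/- Let G and H be graphs on disjoint vertex sets, and let G₀ and H₀ be induced subgraphs of G and H with α(G₀) = α(G) − 1 and α(H₀) = α(H) − 1. Let G₁ be the graph obtained from G by adding one new vertex adjacent to every vertex of V(G)∖V(G₀) (that is, G₁ = j(G,G₀,K₁,∅) where K₁ is the one-vertex graph and its distinguished induced subgraph is empty), and let H₁ be defined from H and H₀ analogously. Then the 1-join J = j(G,G₀,H,H₀) is an α-critical graph if and only if both G₁ and H₁ are α-critical graphs. -/

import Mathlib

open SimpleGraph

/-- The stability (independence) number of the subgraph of `G` induced on the
vertex set `S`: the maximum cardinality of a stable (independent) subset of `S`. -/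
noncomputable def alphaOn {V : Type*} [Fintype V] (G : SimpleGraph V) (S : Set V) : ℕ :=
  sSup {n | ∃ s : Finset V, ↑s ⊆ S ∧ (∀ u ∈ s, ∀ v ∈ s, ¬ G.Adj u v) ∧ s.card = n}

/-- The stability (independence) number `α(G)` of `G`. -/
noncomputable def alphaNum {V : Type*} [Fintype V] (G : SimpleGraph V) : ℕ :=
  alphaOn G Set.univ

/-- The edge `{u, v}` of `G` is an α-critical edge: deleting it increases the
stability number by one. -/
def IsCriticalEdge {V : Type*} [Fintype V] (G : SimpleGraph V) (u v : V) : Prop :=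
  G.Adj u v ∧ alphaNum (G.deleteEdges {s(u, v)}) = alphaNum G + 1

/-- `G` is an α-critical graph: every edge is α-critical. -/
def IsAlphaCritical {V : Type*} [Fintype V] (G : SimpleGraph V) : Prop :=
  ∀ u v, G.Adj u v → alphaNum (G.deleteEdges {s(u, v)}) = alphaNum G + 1

/-- `S` induces a maximal induced subgraph of `G` with stability number `α(G) - 1`:
`α(G[S]) = α(G) - 1` and adding any further vertex raises the stability number to `α(G)`. -/
def IsMaxAlphaSub {V : Type*} [Fintype V] (G : SimpleGraph V) (S : Set V) : Prop :=
  alphaOn G S + 1 = alphaNum G ∧ ∀ w ∉ S, alphaOn G (insert w S) = alphaNum G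

/-- The 1-join `j(G, G₀, H, H₀)` of `G` and `H`, where `A = V(G₀)` and `B = V(H₀)`:
the disjoint union of `G` and `H` together with all edges between `V(G) ∖ A` and
`V(H) ∖ B`. -/
def oneJoin {α β : Type*} (G : SimpleGraph α) (H : SimpleGraph β)
    (A : Set α) (B : Set β) : SimpleGraph (α ⊕ β) :=
  SimpleGraph.fromRel (fun x y =>
    (∃ a b, x = Sum.inl a ∧ y = Sum.inl b ∧ G.Adj a b) ∨
    (∃ a b, x = Sum.inr a ∧ y = Sum.inr b ∧ H.Adj a b) ∨
    (∃ a b, x = Sum.inl a ∧ y = Sum.inr b ∧ a ∉ A ∧ b ∉ B))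

/-- The edge-vertex composition `c(G, e, H, v)` with `e = {v₁, v₂}` and
`N_H(v) = U₁ ⊔ U₂`: vertex set `V(G) ⊔ (V(H) ∖ {v})`, edge set
`(E(G) ∖ {e}) ∪ E(H - v) ∪ {v₁u : u ∈ U₁} ∪ {v₂u : u ∈ U₂}`. -/
def evComp {α β : Type*} (G : SimpleGraph α) (v₁ v₂ : α) (H : SimpleGraph β) (v : β)
    (U₁ U₂ : Set β) : SimpleGraph (α ⊕ {b : β // b ≠ v}) :=
  SimpleGraph.fromRel (fun x y =>
    (∃ a b, x = Sum.inl a ∧ y = Sum.inl b ∧ G.Adj a b ∧ s(a, b) ≠ s(v₁, v₂)) ∨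
    (∃ a b : {b : β // b ≠ v}, x = Sum.inr a ∧ y = Sum.inr b ∧ H.Adj a b) ∨
    (∃ b : {b : β // b ≠ v}, x = Sum.inl v₁ ∧ y = Sum.inr b ∧ (b : β) ∈ U₁) ∨
    (∃ b : {b : β // b ≠ v}, x = Sum.inl v₂ ∧ y = Sum.inr b ∧ (b : β) ∈ U₂))

/-- The splitting `s(H, v)` of the vertex `v` of `H`, with `N_H(v) = N₁ ⊔ N₂`.
The new vertices `v′`, `v″`, `u` are represented by `Sum.inr 0`, `Sum.inr 1`,
`Sum.inr 2` respectively. -/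
def splitting {β : Type*} (H : SimpleGraph β) (v : β) (N₁ N₂ : Set β) :
    SimpleGraph ({b : β // b ≠ v} ⊕ Fin 3) :=
  SimpleGraph.fromRel (fun x y =>
    (∃ a b : {b : β // b ≠ v}, x = Sum.inl a ∧ y = Sum.inl b ∧ H.Adj a b) ∨
    (∃ a : {b : β // b ≠ v}, x = Sum.inl a ∧ y = Sum.inr 0 ∧ (a : β) ∈ N₁) ∨
    (∃ a : {b : β // b ≠ v}, x = Sum.inl a ∧ y = Sum.inr 1 ∧ (a : β) ∈ N₂) ∨
    (x = Sum.inr 0 ∧ y = Sum.inr 2) ∨ (x = Sum.inr 1 ∧ y = Sum.inr 2))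

/-- The duplication `d(G, v)` of the vertex `v` of `G`: a new vertex `v′`
(represented by `Sum.inr ()`) is added, adjacent exactly to the closed
neighborhood `N_G[v]`. -/
def duplication {α : Type*} (G : SimpleGraph α) (v : α) : SimpleGraph (α ⊕ Unit) :=
  SimpleGraph.fromRel (fun x y =>
    (∃ a b, x = Sum.inl a ∧ y = Sum.inl b ∧ G.Adj a b) ∨
    (∃ a, x = Sum.inl a ∧ y = Sum.inr () ∧ a ∈ insert v (G.neighborSet v)))

/-- A graph is duplication free iff it contains no pair of adjacent vertices
with equal closed neighborhoods. -/
def DuplicationFree {α : Type*} (G : SimpleGraph α) : Prop :=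
  ∀ u v, G.Adj u v → insert u (G.neighborSet u) ≠ insert v (G.neighborSet v)

/-- `G` is 2-connected: it has at least three vertices and the deletion of any
single vertex leaves it connected. -/
def TwoConnected {V : Type*} [Fintype V] (G : SimpleGraph V) : Prop :=
  3 ≤ Fintype.card V ∧ ∀ x : V, (G.induce {x}ᶜ).Connected

section basic
variable {V : Type*} [Fintype V] {G G' : SimpleGraph V} {S T : Set V}

lemma alphaOn_bdd (G : SimpleGraph V) (S : Set V) :
    BddAbove {n | ∃ s : Finset V, ↑s ⊆ S ∧ (∀ u ∈ s, ∀ v ∈ s, ¬ G.Adj u v) ∧ s.card = n} := by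
  refine ⟨Fintype.card V, fun n hn => ?_⟩
  obtain ⟨s, -, -, rfl⟩ := hn
  simpa using s.card_le_univ

lemma le_alphaOn {s : Finset V} (hs : ↑s ⊆ S) (hi : ∀ u ∈ s, ∀ v ∈ s, ¬ G.Adj u v) :
    s.card ≤ alphaOn G S :=
  le_csSup (alphaOn_bdd G S) ⟨s, hs, hi, rfl⟩

lemma alphaOn_set_nonempty (G : SimpleGraph V) (S : Set V) :
    {n | ∃ s : Finset V, ↑s ⊆ S ∧ (∀ u ∈ s, ∀ v ∈ s, ¬ G.Adj u v) ∧ s.card = n}.Nonempty :=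
  ⟨0, ∅, by simp⟩

lemma alphaOn_exists (G : SimpleGraph V) (S : Set V) :
    ∃ s : Finset V, ↑s ⊆ S ∧ (∀ u ∈ s, ∀ v ∈ s, ¬ G.Adj u v) ∧ s.card = alphaOn G S :=
  Nat.sSup_mem (alphaOn_set_nonempty G S) (alphaOn_bdd G S)

lemma alphaOn_le {n : ℕ}
    (h : ∀ s : Finset V, ↑s ⊆ S → (∀ u ∈ s, ∀ v ∈ s, ¬ G.Adj u v) → s.card ≤ n) :
    alphaOn G S ≤ n := by
  apply csSup_le (alphaOn_set_nonempty G S)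
  rintro m ⟨s, hs, hi, rfl⟩
  exact h s hs hi

lemma alphaOn_mono (h : S ⊆ T) : alphaOn G S ≤ alphaOn G T := by
  obtain ⟨s, hs, hi, hc⟩ := alphaOn_exists G S
  exact hc ▸ le_alphaOn (hs.trans h) hi

lemma alphaOn_anti (h : G ≤ G') : alphaOn G' S ≤ alphaOn G S := by
  obtain ⟨s, hs, hi, hc⟩ := alphaOn_exists G' S
  exact hc ▸ le_alphaOn hs (fun u hu v hv hadj => hi u hu v hv (h hadj))

lemma alphaOn_insert_le (w : V) : alphaOn G (insert w S) ≤ alphaOn G S + 1 := by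
  classical
  obtain ⟨s, hs, hi, hc⟩ := alphaOn_exists G (insert w S)
  have h1 : ((s.erase w : Finset V) : Set V) ⊆ S := by
    intro x hx
    simp only [Finset.coe_erase, Set.mem_diff] at hx
    rcases hs hx.1 with h | h
    · exact absurd h hx.2
    · exact h
  have h2 := le_alphaOn (G := G) h1
    (fun u hu v hv => hi u (Finset.mem_of_mem_erase hu) v (Finset.mem_of_mem_erase hv))
  have h3 := Finset.pred_card_le_card_erase (a := w) (s := s)
  omega

@[simp] lemma alphaOn_empty : alphaOn G (∅ : Set V) = 0 := by
  apply Nat.le_antisymm _ (Nat.zero_le _)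
  apply alphaOn_le
  intro s hs _
  simp only [Set.subset_empty_iff, Finset.coe_eq_empty] at hs
  simp [hs]

lemma alphaOn_congr (h : S = T) : alphaOn G S = alphaOn G T := by rw [h]

end basic

lemma alphaNum_bot_unit : alphaNum (⊥ : SimpleGraph Unit) = 1 := by
  apply Nat.le_antisymm
  · apply alphaOn_le
    intro s _ _
    simpa using s.card_le_univ
  · have := le_alphaOn (G := (⊥ : SimpleGraph Unit)) (S := Set.univ) (s := {()})
      (by simp) (by simp)
    simpa [alphaNum] using this

lemma alphaOn_bot_unit_insert (y : Unit) :
    alphaOn (⊥ : SimpleGraph Unit) (insert y ∅) = 1 := by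
  have : (insert y ∅ : Set Unit) = Set.univ := by
    ext x; simp [eq_iff_true_of_subsingleton]
  rw [this]; exact alphaNum_bot_unit

lemma exists_not_mem_of_alphaOn {V : Type*} [Fintype V] {G : SimpleGraph V} {S : Set V}
    (h : alphaOn G S + 1 = alphaNum G) : ∃ x, x ∉ S := by
  by_contra hc
  push_neg at hc
  have hU : S = Set.univ := Set.eq_univ_of_forall hc
  rw [hU, show alphaOn G Set.univ = alphaNum G from rfl] at h
  omega

section adj
variable {α β : Type*} {G : SimpleGraph α} {H : SimpleGraph β} {A : Set α} {B : Set β}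

@[simp] lemma oneJoin_adj_inl_inl {a b : α} :
    (oneJoin G H A B).Adj (Sum.inl a) (Sum.inl b) ↔ G.Adj a b := by
  simp only [oneJoin, fromRel_adj, ne_eq, Sum.inl.injEq]
  constructor
  · rintro ⟨hne, h⟩
    rcases h with (⟨a', b', h1, h2, h3⟩ | ⟨a', b', h1, h2, h3⟩ | ⟨a', b', h1, h2, h3⟩) |
      (⟨a', b', h1, h2, h3⟩ | ⟨a', b', h1, h2, h3⟩ | ⟨a', b', h1, h2, h3⟩) <;>
      simp_all
    · exact h3.symm
  · intro h
    exact ⟨h.ne, Or.inl (Or.inl ⟨a, b, rfl, rfl, h⟩)⟩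

@[simp] lemma oneJoin_adj_inr_inr {a b : β} :
    (oneJoin G H A B).Adj (Sum.inr a) (Sum.inr b) ↔ H.Adj a b := by
  simp only [oneJoin, fromRel_adj, ne_eq, Sum.inr.injEq]
  constructor
  · rintro ⟨hne, h⟩
    rcases h with (⟨a', b', h1, h2, h3⟩ | ⟨a', b', h1, h2, h3⟩ | ⟨a', b', h1, h2, h3⟩) |
      (⟨a', b', h1, h2, h3⟩ | ⟨a', b', h1, h2, h3⟩ | ⟨a', b', h1, h2, h3⟩) <;>
      simp_all
    · exact h3.symm
  · intro h
    exact ⟨h.ne, Or.inl (Or.inr (Or.inl ⟨a, b, rfl, rfl, h⟩))⟩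

@[simp] lemma oneJoin_adj_inl_inr {a : α} {b : β} :
    (oneJoin G H A B).Adj (Sum.inl a) (Sum.inr b) ↔ a ∉ A ∧ b ∉ B := by
  simp only [oneJoin, fromRel_adj, ne_eq]
  constructor
  · rintro ⟨hne, h⟩
    rcases h with (⟨a', b', h1, h2, h3⟩ | ⟨a', b', h1, h2, h3⟩ | ⟨a', b', h1, h2, h3⟩) |
      (⟨a', b', h1, h2, h3⟩ | ⟨a', b', h1, h2, h3⟩ | ⟨a', b', h1, h2, h3⟩) <;>
      simp_all
  · intro h
    exact ⟨by simp, Or.inl (Or.inr (Or.inr ⟨a, b, rfl, rfl, h⟩))⟩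

@[simp] lemma oneJoin_adj_inr_inl {a : α} {b : β} :
    (oneJoin G H A B).Adj (Sum.inr b) (Sum.inl a) ↔ a ∉ A ∧ b ∉ B := by
  rw [SimpleGraph.adj_comm]; exact oneJoin_adj_inl_inr

end adj

section joincalc
variable {α β : Type*} [Fintype α] [Fintype β]
  {G : SimpleGraph α} {H : SimpleGraph β} {A : Set α} {B : Set β}

lemma card_le_of_indep_oneJoin {s : Finset (α ⊕ β)}
    (hi : ∀ u ∈ s, ∀ v ∈ s, ¬ (oneJoin G H A B).Adj u v) :
    s.card ≤ max (alphaNum G + alphaOn H B) (alphaOn G A + alphaNum H) := by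
  have hl : ∀ u ∈ s.toLeft, ∀ v ∈ s.toLeft, ¬ G.Adj u v := by
    intro u hu v hv hadj
    exact hi _ (Finset.mem_toLeft.1 hu) _ (Finset.mem_toLeft.1 hv)
      (oneJoin_adj_inl_inl.2 hadj)
  have hr : ∀ u ∈ s.toRight, ∀ v ∈ s.toRight, ¬ H.Adj u v := by
    intro u hu v hv hadj
    exact hi _ (Finset.mem_toRight.1 hu) _ (Finset.mem_toRight.1 hv)
      (oneJoin_adj_inr_inr.2 hadj)
  have hcard := Finset.card_toLeft_add_card_toRight (u := s)
  by_cases hcase : (s.toLeft : Set α) ⊆ A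
  · have h1 : s.toLeft.card ≤ alphaOn G A := le_alphaOn hcase hl
    have h2 : s.toRight.card ≤ alphaNum H := le_alphaOn (Set.subset_univ _) hr
    omega
  · obtain ⟨a, ha, haA⟩ : ∃ a ∈ s.toLeft, a ∉ A := by
      simpa [Set.subset_def] using hcase
    have hrB : (s.toRight : Set β) ⊆ B := by
      intro b hb
      by_contra hbB
      simp only [Finset.coe_sort_coe, Finset.mem_coe] at hb
      exact hi _ (Finset.mem_toLeft.1 ha) _ (Finset.mem_toRight.1 hb)
        (oneJoin_adj_inl_inr.2 ⟨haA, hbB⟩)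
    have h1 : s.toLeft.card ≤ alphaNum G := le_alphaOn (Set.subset_univ _) hl
    have h2 : s.toRight.card ≤ alphaOn H B := le_alphaOn hrB hr
    omega

lemma le_alphaNum_oneJoin_of {J : SimpleGraph (α ⊕ β)} {S : Set α} {T : Set β}
    (hJl : ∀ a b, J.Adj (Sum.inl a) (Sum.inl b) → G.Adj a b)
    (hJr : ∀ a b, J.Adj (Sum.inr a) (Sum.inr b) → H.Adj a b)
    (hJc : ∀ a ∈ S, ∀ b ∈ T, ¬ J.Adj (Sum.inl a) (Sum.inr b)) :
    alphaOn G S + alphaOn H T ≤ alphaNum J := by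
  obtain ⟨s, hsS, hsi, hsc⟩ := alphaOn_exists G S
  obtain ⟨t, htT, hti, htc⟩ := alphaOn_exists H T
  have hindep : ∀ u ∈ s.disjSum t, ∀ v ∈ s.disjSum t, ¬ J.Adj u v := by
    rintro (a | a) hu (b | b) hv hadj
    · rw [Finset.inl_mem_disjSum] at hu hv
      exact hsi a hu b hv (hJl a b hadj)
    · rw [Finset.inl_mem_disjSum] at hu
      rw [Finset.inr_mem_disjSum] at hv
      exact hJc a (hsS hu) b (htT hv) hadj
    · rw [Finset.inr_mem_disjSum] at hu
      rw [Finset.inl_mem_disjSum] at hv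
      exact hJc b (hsS hv) a (htT hu) (hadj.symm)
    · rw [Finset.inr_mem_disjSum] at hu hv
      exact hti a hu b hv (hJr a b hadj)
  have := le_alphaOn (G := J) (S := Set.univ) (s := s.disjSum t)
    (Set.subset_univ _) hindep
  rwa [Finset.card_disjSum, hsc, htc] at this

lemma alphaNum_oneJoin :
    alphaNum (oneJoin G H A B) =
      max (alphaNum G + alphaOn H B) (alphaOn G A + alphaNum H) := by
  apply Nat.le_antisymm
  · exact alphaOn_le fun s _ hi => card_le_of_indep_oneJoin hi
  · apply max_le
    · apply le_alphaNum_oneJoin_of (S := Set.univ) (T := B)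
      · intro a b h; exact oneJoin_adj_inl_inl.1 h
      · intro a b h; exact oneJoin_adj_inr_inr.1 h
      · intro a _ b hb hadj
        exact (oneJoin_adj_inl_inr.1 hadj).2 hb
    · apply le_alphaNum_oneJoin_of (S := A) (T := Set.univ)
      · intro a b h; exact oneJoin_adj_inl_inl.1 h
      · intro a b h; exact oneJoin_adj_inr_inr.1 h
      · intro a ha b _ hadj
        exact (oneJoin_adj_inl_inr.1 hadj).1 ha


lemma oneJoin_deleteEdges_inl (a b : α) :
    (oneJoin G H A B).deleteEdges {s(Sum.inl a, Sum.inl b)} =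
      oneJoin (G.deleteEdges {s(a, b)}) H A B := by
  ext u v
  cases u <;> cases v <;>
    simp [deleteEdges_adj, Sym2.eq_iff] <;> tauto

lemma oneJoin_deleteEdges_inr (a b : β) :
    (oneJoin G H A B).deleteEdges {s(Sum.inr a, Sum.inr b)} =
      oneJoin G (H.deleteEdges {s(a, b)}) A B := by
  ext u v
  cases u <;> cases v <;>
    simp [deleteEdges_adj, Sym2.eq_iff] <;> tauto

lemma alphaNum_oneJoin_del {x : α} {y : β} :
    alphaNum ((oneJoin G H A B).deleteEdges {s(Sum.inl x, Sum.inr y)}) =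
      max (alphaNum (oneJoin G H A B))
        (alphaOn G (insert x A) + alphaOn H (insert y B)) := by
  set J := oneJoin G H A B with hJ
  set e : Sym2 (α ⊕ β) := s(Sum.inl x, Sum.inr y) with he
  apply Nat.le_antisymm
  · apply alphaOn_le
    intro s _ hi
    have hl : ∀ u ∈ s.toLeft, ∀ v ∈ s.toLeft, ¬ G.Adj u v := by
      intro u hu v hv hadj
      refine hi _ (Finset.mem_toLeft.1 hu) _ (Finset.mem_toLeft.1 hv) ?_
      rw [deleteEdges_adj]
      exact ⟨oneJoin_adj_inl_inl.2 hadj, by simp [he, Sym2.eq_iff]⟩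
    have hr : ∀ u ∈ s.toRight, ∀ v ∈ s.toRight, ¬ H.Adj u v := by
      intro u hu v hv hadj
      refine hi _ (Finset.mem_toRight.1 hu) _ (Finset.mem_toRight.1 hv) ?_
      rw [deleteEdges_adj]
      exact ⟨oneJoin_adj_inr_inr.2 hadj, by simp [he, Sym2.eq_iff]⟩
    have hcard := Finset.card_toLeft_add_card_toRight (u := s)
    have hcross : ∀ a ∈ s.toLeft, ∀ b ∈ s.toRight, a ∉ A → b ∉ B → a = x ∧ b = y := by
      intro a ha b hb haA hbB
      by_contra hne
      refine hi _ (Finset.mem_toLeft.1 ha) _ (Finset.mem_toRight.1 hb) ?_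
      rw [deleteEdges_adj]
      refine ⟨oneJoin_adj_inl_inr.2 ⟨haA, hbB⟩, ?_⟩
      intro hmem
      apply hne
      simpa [he, Sym2.eq_iff] using hmem
    by_cases hlx : (s.toLeft : Set α) ⊆ insert x A
    · by_cases hry : (s.toRight : Set β) ⊆ insert y B
      · have h1 : s.toLeft.card ≤ alphaOn G (insert x A) := le_alphaOn hlx hl
        have h2 : s.toRight.card ≤ alphaOn H (insert y B) := le_alphaOn hry hr
        omega
      · obtain ⟨b, hb, hbB⟩ : ∃ b ∈ s.toRight, b ∉ insert y B := by
          simpa [Set.subset_def] using hry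
        simp only [Set.mem_insert_iff, not_or] at hbB
        have hlA : (s.toLeft : Set α) ⊆ A := by
          intro a ha
          by_contra haA
          simp only [Finset.mem_coe] at ha
          exact hbB.1 (hcross a ha b hb haA hbB.2).2
        have h1 : s.toLeft.card ≤ alphaOn G A := le_alphaOn hlA hl
        have h2 : s.toRight.card ≤ alphaNum H := le_alphaOn (Set.subset_univ _) hr
        have h3 : alphaOn G A + alphaNum H ≤ alphaNum J := by
          rw [hJ, alphaNum_oneJoin]; exact le_max_right _ _
        omega
    · obtain ⟨a, ha, haA⟩ : ∃ a ∈ s.toLeft, a ∉ insert x A := by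
        simpa [Set.subset_def] using hlx
      simp only [Set.mem_insert_iff, not_or] at haA
      have hrB : (s.toRight : Set β) ⊆ B := by
        intro b hb
        by_contra hbB
        simp only [Finset.mem_coe] at hb
        exact haA.1 (hcross a ha b hb haA.2 hbB).1
      have h1 : s.toLeft.card ≤ alphaNum G := le_alphaOn (Set.subset_univ _) hl
      have h2 : s.toRight.card ≤ alphaOn H B := le_alphaOn hrB hr
      have h3 : alphaNum G + alphaOn H B ≤ alphaNum J := by
        rw [hJ, alphaNum_oneJoin]; exact le_max_left _ _
      omega
  · apply max_le
    · exact alphaOn_anti (deleteEdges_le _)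
    · apply le_alphaNum_oneJoin_of
      · intro a b h
        exact oneJoin_adj_inl_inl.1 (h.1 : J.Adj _ _)
      · intro a b h
        exact oneJoin_adj_inr_inr.1 (h.1 : J.Adj _ _)
      · intro a ha b hb hadj
        rw [deleteEdges_adj] at hadj
        obtain ⟨haA, hbB⟩ := oneJoin_adj_inl_inr.1 (hadj.1 : J.Adj _ _)
        rcases ha with rfl | ha
        · rcases hb with rfl | hb
          · exact hadj.2 (by simp [he])
          · exact hbB hb
        · exact haA ha

end joincalc


section main
variable {α β : Type*} [Fintype α] [Fintype β]
  {G : SimpleGraph α} {H : SimpleGraph β} {A : Set α} {B : Set β}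

lemma crit_one (hA : alphaOn G A + 1 = alphaNum G) :
    IsAlphaCritical (oneJoin G (⊥ : SimpleGraph Unit) A (∅ : Set Unit)) ↔
      ((∀ a b, G.Adj a b → max (alphaNum (G.deleteEdges {s(a, b)}))
          (alphaOn (G.deleteEdges {s(a, b)}) A + 1) = alphaOn G A + 2) ∧
       (∀ x ∉ A, alphaOn G (insert x A) = alphaOn G A + 1)) := by
  have hval : alphaNum (oneJoin G (⊥ : SimpleGraph Unit) A (∅ : Set Unit)) =
      alphaOn G A + 1 := by
    rw [alphaNum_oneJoin, alphaOn_empty, alphaNum_bot_unit]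
    omega
  constructor
  · intro hcrit
    constructor
    · intro a b hab
      have := hcrit (Sum.inl a) (Sum.inl b) (oneJoin_adj_inl_inl.2 hab)
      rw [oneJoin_deleteEdges_inl, alphaNum_oneJoin, alphaOn_empty, alphaNum_bot_unit,
        hval] at this
      omega
    · intro x hx
      have := hcrit (Sum.inl x) (Sum.inr ()) (oneJoin_adj_inl_inr.2 ⟨hx, by simp⟩)
      rw [alphaNum_oneJoin_del, hval, alphaOn_bot_unit_insert] at this
      have hle := alphaOn_insert_le (G := G) (S := A) x
      omega
  · rintro ⟨PG, QG⟩ u v huv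
    match u, v with
    | Sum.inl a, Sum.inl b =>
      have hab := oneJoin_adj_inl_inl.1 huv
      rw [oneJoin_deleteEdges_inl, alphaNum_oneJoin, alphaOn_empty, alphaNum_bot_unit, hval]
      have := PG a b hab
      omega
    | Sum.inl a, Sum.inr b =>
      obtain ⟨ha, -⟩ := oneJoin_adj_inl_inr.1 huv
      rw [alphaNum_oneJoin_del, hval, alphaOn_bot_unit_insert, QG a ha]
      omega
    | Sum.inr b, Sum.inl a =>
      obtain ⟨ha, -⟩ := oneJoin_adj_inr_inl.1 huv
      rw [Sym2.eq_swap, alphaNum_oneJoin_del, hval, alphaOn_bot_unit_insert, QG a ha]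
      omega
    | Sum.inr a, Sum.inr b =>
      exact absurd (oneJoin_adj_inr_inr.1 huv) (by simp)

end main

/-- `J = j(G, G₀, H, H₀)` is α-critical iff both
`G₁ = j(G, G₀, K₁, ∅)` and `H₁ = j(H, H₀, K₁, ∅)` are α-critical, where `K₁`
is the one-vertex graph (a new vertex joined to all of `V(G) ∖ V(G₀)`). -/
theorem oneJoin_isAlphaCritical_iff {α β : Type*} [Fintype α] [Fintype β]
    (G : SimpleGraph α) (H : SimpleGraph β) (A : Set α) (B : Set β)
    (hA : alphaOn G A + 1 = alphaNum G) (hB : alphaOn H B + 1 = alphaNum H) :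
    IsAlphaCritical (oneJoin G H A B) ↔
      (IsAlphaCritical (oneJoin G (⊥ : SimpleGraph Unit) A (∅ : Set Unit)) ∧
       IsAlphaCritical (oneJoin H (⊥ : SimpleGraph Unit) B (∅ : Set Unit))) := by
  obtain ⟨x₀, hx₀⟩ := exists_not_mem_of_alphaOn hA
  obtain ⟨y₀, hy₀⟩ := exists_not_mem_of_alphaOn hB
  have hval : alphaNum (oneJoin G H A B) = alphaOn G A + alphaOn H B + 1 := by
    rw [alphaNum_oneJoin]; omega
  rw [crit_one hA, crit_one hB]
  constructor
  · intro hcrit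
    have QG : ∀ x ∉ A, alphaOn G (insert x A) = alphaOn G A + 1 := by
      intro x hx
      have := hcrit (Sum.inl x) (Sum.inr y₀) (oneJoin_adj_inl_inr.2 ⟨hx, hy₀⟩)
      rw [alphaNum_oneJoin_del, hval] at this
      have h1 := alphaOn_insert_le (G := G) (S := A) x
      have h2 := alphaOn_insert_le (G := H) (S := B) y₀
      omega
    have QH : ∀ y ∉ B, alphaOn H (insert y B) = alphaOn H B + 1 := by
      intro y hy
      have := hcrit (Sum.inl x₀) (Sum.inr y) (oneJoin_adj_inl_inr.2 ⟨hx₀, hy⟩)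
      rw [alphaNum_oneJoin_del, hval] at this
      have h1 := alphaOn_insert_le (G := G) (S := A) x₀
      have h2 := alphaOn_insert_le (G := H) (S := B) y
      omega
    refine ⟨⟨?_, QG⟩, ?_, QH⟩
    · intro a b hab
      have := hcrit (Sum.inl a) (Sum.inl b) (oneJoin_adj_inl_inl.2 hab)
      rw [oneJoin_deleteEdges_inl, alphaNum_oneJoin, hval] at this
      omega
    · intro a b hab
      have := hcrit (Sum.inr a) (Sum.inr b) (oneJoin_adj_inr_inr.2 hab)
      rw [oneJoin_deleteEdges_inr, alphaNum_oneJoin, hval] at this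
      omega
  · rintro ⟨⟨PG, QG⟩, PH, QH⟩ u v huv
    match u, v with
    | Sum.inl a, Sum.inl b =>
      have hab := oneJoin_adj_inl_inl.1 huv
      rw [oneJoin_deleteEdges_inl, alphaNum_oneJoin, hval]
      have := PG a b hab
      omega
    | Sum.inr a, Sum.inr b =>
      have hab := oneJoin_adj_inr_inr.1 huv
      rw [oneJoin_deleteEdges_inr, alphaNum_oneJoin, hval]
      have := PH a b hab
      omega
    | Sum.inl a, Sum.inr b =>
      obtain ⟨ha, hb⟩ := oneJoin_adj_inl_inr.1 huv
      rw [alphaNum_oneJoin_del, hval, QG a ha, QH b hb]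
      omega
    | Sum.inr b, Sum.inl a =>
      obtain ⟨ha, hb⟩ := oneJoin_adj_inr_inl.1 huv
      rw [Sym2.eq_swap, alphaNum_oneJoin_del, hval, QG a ha, QH b hb]
      omega
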